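/- Let S be a Seidel matrix of order n. Then the automorphism group Aut(S) of S is isomorphic, as a group, to the automorphism group Aut(X(S)) of the associated two-colored graph X(S) (automorphisms of X(S) being color-preserving graph automorphisms). -/

import Mathlib

open Matrix

/-- A Seidel matrix: a real symmetric matrix with zero diagonal and all off-diagonal
entries equal to `±1`. -/
def IsSeidel {m : Type*} (S : Matrix m m ℝ) : Prop :=
  S.IsSymm ∧ (∀ i, S i i = 0) ∧ ∀ i j, i ≠ j → S i j = 1 ∨ S i j = -1

/-- A signed permutation matrix: exactly one nonzero entry, equal to `±1`, in each row and
in each column. -/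
def IsSignedPerm {m : Type*} [Fintype m] [DecidableEq m] (P : Matrix m m ℝ) : Prop :=
  ∃ (σ : Equiv.Perm m) (ε : m → ℝ), (∀ i, ε i = 1 ∨ ε i = -1) ∧
    ∀ i j, P i j = if i = σ j then ε j else 0

section lemmas

variable {m : Type*} [Fintype m] [DecidableEq m] {P Q : Matrix m m ℝ}

theorem IsSignedPerm.one : IsSignedPerm (1 : Matrix m m ℝ) :=
  ⟨1, fun _ => 1, fun _ => Or.inl rfl, fun i j => by simp [Matrix.one_apply]; split_ifs <;> simp_all⟩

theorem IsSignedPerm.mul (hP : IsSignedPerm P) (hQ : IsSignedPerm Q) :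
    IsSignedPerm (P * Q) := by
  obtain ⟨σ, ε, hε, hPe⟩ := hP
  obtain ⟨τ, δ, hδ, hQe⟩ := hQ
  refine ⟨σ * τ, fun j => ε (τ j) * δ j, fun j => ?_, fun i j => ?_⟩
  · rcases hε (τ j) with h | h <;> rcases hδ j with h' | h' <;> simp [h, h']
  · rw [Matrix.mul_apply, Finset.sum_eq_single (τ j)]
    · rw [hPe, hQe, if_pos rfl]
      simp [Equiv.Perm.mul_apply, ite_mul]
      split_ifs <;> simp_all
    · intro k _ hk
      rw [hQe, if_neg hk, mul_zero]
    · intro h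
      exact absurd (Finset.mem_univ _) h

theorem IsSignedPerm.transpose (hP : IsSignedPerm P) : IsSignedPerm Pᵀ := by
  obtain ⟨σ, ε, hε, hPe⟩ := hP
  refine ⟨σ⁻¹, fun i => ε (σ⁻¹ i), fun i => hε _, fun i j => ?_⟩
  rw [Matrix.transpose_apply, hPe]
  by_cases h : i = σ⁻¹ j
  · subst h
    simp
  · rw [if_neg, if_neg h]
    intro hj
    exact h (by rw [hj, Equiv.Perm.coe_inv, Equiv.symm_apply_apply])

theorem IsSignedPerm.mul_transpose_self (hP : IsSignedPerm P) : P * Pᵀ = 1 := by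
  obtain ⟨σ, ε, hε, hPe⟩ := hP
  ext i j
  rw [Matrix.mul_apply, Matrix.one_apply, Finset.sum_eq_single (σ⁻¹ i)]
  · rw [Matrix.transpose_apply, hPe, hPe]
    simp only [show σ (σ⁻¹ i) = i from σ.apply_symm_apply i, if_pos rfl]
    by_cases h : i = j
    · subst h
      rcases hε (σ⁻¹ i) with h' | h' <;> rw [Equiv.Perm.coe_inv] at h' <;> simp [h']
    · rw [if_neg fun hji => h ((hji : j = i)).symm, mul_zero, if_neg h]
  · intro k _ hk
    rw [hPe, if_neg, zero_mul]
    intro hik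
    exact hk (by rw [hik, Equiv.Perm.coe_inv, Equiv.symm_apply_apply])
  · intro h
    exact absurd (Finset.mem_univ _) h

end lemmas

/-- The automorphism group of a Seidel matrix `S`: the group of (invertible) signed
permutation matrices `P` with `P S Pᵀ = S`, as a subgroup of the units of the matrix ring. -/
def seidelAut {m : Type*} [Fintype m] [DecidableEq m] (S : Matrix m m ℝ) :
    Subgroup (Matrix m m ℝ)ˣ where
  carrier := {P | IsSignedPerm (P : Matrix m m ℝ) ∧
    (P : Matrix m m ℝ) * S * (P : Matrix m m ℝ)ᵀ = S}
  one_mem' := ⟨by rw [Units.val_one]; exact IsSignedPerm.one, by simp⟩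
  mul_mem' := by
    rintro P Q ⟨hP1, hP2⟩ ⟨hQ1, hQ2⟩
    refine ⟨by rw [Units.val_mul]; exact hP1.mul hQ1, ?_⟩
    rw [Units.val_mul, Matrix.transpose_mul]
    calc (P : Matrix m m ℝ) * (Q : Matrix m m ℝ) * S *
          ((Q : Matrix m m ℝ)ᵀ * (P : Matrix m m ℝ)ᵀ)
        = (P : Matrix m m ℝ) * ((Q : Matrix m m ℝ) * S * (Q : Matrix m m ℝ)ᵀ) *
          (P : Matrix m m ℝ)ᵀ := by
          simp only [Matrix.mul_assoc]
      _ = S := by rw [hQ2, hP2]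
  inv_mem' := by
    rintro P ⟨hP1, hP2⟩
    have h1 : (P : Matrix m m ℝ) * (P : Matrix m m ℝ)ᵀ = 1 := hP1.mul_transpose_self
    have hinv : ((P⁻¹ : (Matrix m m ℝ)ˣ) : Matrix m m ℝ) = (P : Matrix m m ℝ)ᵀ := by
      calc ((P⁻¹ : (Matrix m m ℝ)ˣ) : Matrix m m ℝ)
          = ((P⁻¹ : (Matrix m m ℝ)ˣ) : Matrix m m ℝ) *
            ((P : Matrix m m ℝ) * (P : Matrix m m ℝ)ᵀ) := by rw [h1, mul_one]
        _ = (((P⁻¹ : (Matrix m m ℝ)ˣ) : Matrix m m ℝ) * (P : Matrix m m ℝ)) *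
            (P : Matrix m m ℝ)ᵀ := by rw [mul_assoc]
        _ = (P : Matrix m m ℝ)ᵀ := by rw [Units.inv_mul, one_mul]
    have h2 : (P : Matrix m m ℝ)ᵀ * (P : Matrix m m ℝ) = 1 := by
      rw [← hinv]; exact Units.inv_mul P
    refine ⟨by rw [hinv]; exact hP1.transpose, ?_⟩
    rw [hinv, Matrix.transpose_transpose]
    calc (P : Matrix m m ℝ)ᵀ * S * (P : Matrix m m ℝ)
        = (P : Matrix m m ℝ)ᵀ *
          ((P : Matrix m m ℝ) * S * (P : Matrix m m ℝ)ᵀ) * (P : Matrix m m ℝ) := by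
          rw [hP2]
      _ = ((P : Matrix m m ℝ)ᵀ * (P : Matrix m m ℝ)) * S *
          ((P : Matrix m m ℝ)ᵀ * (P : Matrix m m ℝ)) := by
          simp only [Matrix.mul_assoc]
      _ = S := by rw [h2, one_mul, mul_one]

/-- The vertex set of the graph `X(S)`: the vertices `u_i` (left summand) together with the
vertices `v_i^(k)` (right summand). -/
abbrev XVertex (n : ℕ) := Fin n ⊕ Fin n × Fin 2

/-- The defining edge relation of `X(S)`: `u_i ∼ v_i^(k)` for all `i, k`;
`v_i^(k) ∼ v_j^(k)` when `S i j = 1`; and `v_i^(k) ∼ v_j^(1−k)` when `S i j = −1`. -/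
def XRel {n : ℕ} (S : Matrix (Fin n) (Fin n) ℝ) : XVertex n → XVertex n → Prop
  | Sum.inl i, Sum.inr p => p.1 = i
  | Sum.inr p, Sum.inr q =>
      (p.2 = q.2 ∧ S p.1 q.1 = 1) ∨ (p.2 ≠ q.2 ∧ S p.1 q.1 = -1)
  | _, _ => False

/-- The two-colored graph `X(S)` on `3n` vertices associated with a Seidel matrix `S`. -/
def XGraph {n : ℕ} (S : Matrix (Fin n) (Fin n) ℝ) : SimpleGraph (XVertex n) :=
  SimpleGraph.fromRel (XRel S)

/-- The coloring of the vertices of `X(S)`: the vertices `u_i` get color `0` and the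
vertices `v_i^(k)` get color `1`. -/
def vertexColor {n : ℕ} : XVertex n → Fin 2
  | Sum.inl _ => 0
  | Sum.inr _ => 1

/-- The automorphism group of the two-colored graph `X(S)`: color-preserving graph
automorphisms, as a subgroup of the permutations of the vertex set. -/
def colorAut {n : ℕ} (S : Matrix (Fin n) (Fin n) ℝ) :
    Subgroup (Equiv.Perm (XVertex n)) where
  carrier := {φ | (∀ a b, (XGraph S).Adj (φ a) (φ b) ↔ (XGraph S).Adj a b) ∧
    ∀ v, vertexColor (φ v) = vertexColor v}
  one_mem' := ⟨fun a b => by simp, fun v => by simp⟩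
  mul_mem' := by
    rintro φ ψ ⟨hφ1, hφ2⟩ ⟨hψ1, hψ2⟩
    refine ⟨fun a b => ?_, fun v => ?_⟩
    · rw [Equiv.Perm.mul_apply, Equiv.Perm.mul_apply, hφ1, hψ1]
    · rw [Equiv.Perm.mul_apply, hφ2, hψ2]
  inv_mem' := by
    rintro φ ⟨hφ1, hφ2⟩
    refine ⟨fun a b => ?_, fun v => ?_⟩
    · have := hφ1 (φ⁻¹ a) (φ⁻¹ b)
      simpa [Equiv.apply_symm_apply] using this.symm
    · have := hφ2 (φ⁻¹ v)
      simpa [Equiv.apply_symm_apply] using this.symm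

namespace SeidelAux

variable {n : ℕ} {S : Matrix (Fin n) (Fin n) ℝ}

/-- sign of an element of `Fin 2`. -/
def sg : Fin 2 → ℝ := fun k => if k = 0 then 1 else -1

lemma sg_ne_zero (k : Fin 2) : sg k ≠ 0 := by fin_cases k <;> norm_num [sg]

lemma sg_pm (k : Fin 2) : sg k = 1 ∨ sg k = -1 := by fin_cases k <;> norm_num [sg]

lemma sg_if (a b : Fin 2) : sg a * sg b = if a = b then 1 else -1 := by
  fin_cases a <;> fin_cases b <;> norm_num [sg]

lemma sg_zero : sg 0 = 1 := if_pos rfl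

lemma sg_one : sg 1 = -1 := if_neg (by decide)

lemma sg_add (a b : Fin 2) : sg (a + b) = sg a * sg b := by
  have h : ∀ x : Fin 2, x = 0 ∨ x = 1 := by decide
  rcases h a with rfl | rfl <;> rcases h b with rfl | rfl
  · rw [add_zero, sg_zero, one_mul]
  · rw [zero_add, sg_zero, one_mul]
  · rw [add_zero, sg_zero, mul_one]
  · rw [show (1 + 1 : Fin 2) = 0 from rfl, sg_zero, sg_one]; norm_num

lemma sg_inj {a b : Fin 2} (h : sg a = sg b) : a = b := by
  by_contra hne
  have h1 := sg_if a b
  rw [if_neg hne, h, sg_if, if_pos rfl] at h1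
  norm_num at h1

lemma fin2_key (a b k l : Fin 2) : a + k = b + l ↔ ((a = b) ↔ (k = l)) := by
  revert a b k l; decide

lemma fin2_ne' (a b : Fin 2) (h : b ≠ a) : a = b + 1 := by revert h; revert a b; decide

lemma fin2_one_add (k l : Fin 2) : k = l + 1 ↔ k ≠ l := by revert k l; decide

lemma fin2_ne_one_add (k l : Fin 2) (h : k ≠ l + 1) : k = l := by revert h; revert k l; decide

/-- sign of a vertex. -/
def sgn : XVertex n → ℝ
  | Sum.inl _ => 1
  | Sum.inr (_, k) => sg k

/-- The matrix associated with a permutation of the vertices of `X(S)`. -/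
def matOf (φ : Equiv.Perm (XVertex n)) : Matrix (Fin n) (Fin n) ℝ :=
  Matrix.of fun i j =>
    if φ (Sum.inl j) = Sum.inl i then sgn (φ (Sum.inr (j, 0))) else 0

/- Adjacency characterizations for `XGraph`. -/

lemma adj_inl_inl (i j : Fin n) : ¬ (XGraph S).Adj (Sum.inl i) (Sum.inl j) := by
  rintro ⟨-, h | h⟩ <;> exact h

lemma adj_inl_inr (i : Fin n) (p : Fin n × Fin 2) :
    (XGraph S).Adj (Sum.inl i) (Sum.inr p) ↔ p.1 = i := by
  constructor
  · rintro ⟨-, h | h⟩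
    · exact h
    · exact h.elim
  · intro h
    exact ⟨by simp, Or.inl h⟩

lemma adj_inr_inl (i : Fin n) (p : Fin n × Fin 2) :
    (XGraph S).Adj (Sum.inr p) (Sum.inl i) ↔ p.1 = i := by
  rw [SimpleGraph.adj_comm]
  exact adj_inl_inr i p

lemma adj_inr_inr (hS : IsSeidel S) (i j : Fin n) (k l : Fin 2) :
    (XGraph S).Adj (Sum.inr (i, k)) (Sum.inr (j, l)) ↔
      ((k = l ∧ S i j = 1) ∨ (k ≠ l ∧ S i j = -1)) := by
  have hsymm : S j i = S i j := hS.1.apply i j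
  constructor
  · rintro ⟨-, h | h⟩
    · exact h
    · rcases h with ⟨h1, h2⟩ | ⟨h1, h2⟩
      · exact Or.inl ⟨h1.symm, by rw [← hsymm]; exact h2⟩
      · exact Or.inr ⟨fun h => h1 h.symm, by rw [← hsymm]; exact h2⟩
  · rintro (⟨h1, h2⟩ | ⟨h1, h2⟩)
    · have hij : i ≠ j := by
        rintro rfl
        rw [hS.2.1] at h2
        norm_num at h2
      exact ⟨by simp [hij], Or.inl (Or.inl ⟨h1, h2⟩)⟩
    · have hij : i ≠ j := by
        rintro rfl
        rw [hS.2.1] at h2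
        norm_num at h2
      exact ⟨by simp [hij], Or.inl (Or.inr ⟨h1, h2⟩)⟩

/-- Structure of a color-preserving automorphism of `X(S)`. -/
lemma colorAut_structure {φ : Equiv.Perm (XVertex n)} (hφ : φ ∈ colorAut S) :
    ∃ (τ : Equiv.Perm (Fin n)) (d : Fin n → Fin 2),
      (∀ i, φ (Sum.inl i) = Sum.inl (τ i)) ∧
      ∀ i k, φ (Sum.inr (i, k)) = Sum.inr (τ i, k + d i) := by
  obtain ⟨hadj, hcol⟩ := hφ
  have hl : ∀ i : Fin n, ∃ j, φ (Sum.inl i) = Sum.inl j := by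
    intro i
    have h := hcol (Sum.inl i)
    rcases hx : φ (Sum.inl i) with j | p
    · exact ⟨j, rfl⟩
    · rw [hx] at h
      exact absurd h (by simp [vertexColor])
  choose t ht using hl
  have htinj : Function.Injective t := by
    intro a b hab
    have h := φ.injective (show φ (Sum.inl a) = φ (Sum.inl b) by rw [ht a, ht b, hab])
    exact Sum.inl.inj h
  have htbij : Function.Bijective t := Finite.injective_iff_bijective.mp htinj
  have hv : ∀ (i : Fin n) (k : Fin 2), ∃ l, φ (Sum.inr (i, k)) = Sum.inr (t i, l) := by
    intro i k
    have hadj1 : (XGraph S).Adj (Sum.inl i) (Sum.inr (i, k)) := (adj_inl_inr i (i, k)).mpr rfl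
    have h2 : (XGraph S).Adj (φ (Sum.inl i)) (φ (Sum.inr (i, k))) := (hadj _ _).mpr hadj1
    rcases hx : φ (Sum.inr (i, k)) with j | p
    · have h := hcol (Sum.inr (i, k))
      rw [hx] at h
      exact absurd h (by simp [vertexColor])
    · rw [ht, hx] at h2
      have h3 := (adj_inl_inr (t i) p).mp h2
      exact ⟨p.2, congrArg Sum.inr (Prod.ext h3 rfl)⟩
  choose g hg using hv
  have hginj : ∀ i, g i 1 ≠ g i 0 := by
    intro i h
    have h2 := φ.injective ((hg i 1).trans (by rw [h, ← hg i 0]))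
    simp at h2
  refine ⟨Equiv.ofBijective t htbij, fun i => g i 0, fun i => ht i, ?_⟩
  intro i k
  have hk : g i k = k + g i 0 := by
    match k with
    | 0 => rw [zero_add]
    | 1 =>
      have h := fin2_ne' (g i 1) (g i 0) (fun h => hginj i h.symm)
      rw [h, add_comm]
  rw [hg i k, hk]
  rfl

/-- The sign relation satisfied by a color-preserving automorphism. -/
lemma rel_of_mem (hS : IsSeidel S) {φ : Equiv.Perm (XVertex n)} (hφ : φ ∈ colorAut S)
    {τ : Equiv.Perm (Fin n)} {d : Fin n → Fin 2}
    (h2 : ∀ i k, φ (Sum.inr (i, k)) = Sum.inr (τ i, k + d i)) :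
    ∀ i j, S (τ i) (τ j) = sg (d i) * sg (d j) * S i j := by
  intro i j
  by_cases hij : i = j
  · subst hij
    rw [hS.2.1, hS.2.1, mul_zero]
  · rcases hS.2.2 i j hij with h | h
    · have ha : (XGraph S).Adj (Sum.inr (i, (0 : Fin 2))) (Sum.inr (j, 0)) :=
        (adj_inr_inr hS i j 0 0).mpr (Or.inl ⟨rfl, h⟩)
      have hb := (hφ.1 _ _).mpr ha
      rw [h2, h2, zero_add, zero_add] at hb
      rcases (adj_inr_inr hS _ _ _ _).mp hb with ⟨hd, hs⟩ | ⟨hd, hs⟩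
      · rw [hs, h, sg_if, if_pos hd, mul_one]
      · rw [hs, h, sg_if, if_neg hd, mul_one]
    · have ha : (XGraph S).Adj (Sum.inr (i, (0 : Fin 2))) (Sum.inr (j, 1)) :=
        (adj_inr_inr hS i j 0 1).mpr (Or.inr ⟨by decide, h⟩)
      have hb := (hφ.1 _ _).mpr ha
      rw [h2, h2, zero_add] at hb
      rcases (adj_inr_inr hS _ _ _ _).mp hb with ⟨hd, hs⟩ | ⟨hd, hs⟩
      · have hd' : d i ≠ d j := by
          rw [add_comm] at hd
          exact (fin2_one_add (d i) (d j)).mp hd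
        rw [hs, h, sg_if, if_neg hd']
        norm_num
      · have hd' : d i = d j := by
          rw [add_comm] at hd
          exact fin2_ne_one_add (d i) (d j) hd
        rw [hs, h, sg_if, if_pos hd']
        norm_num

lemma conj_apply {P : Matrix (Fin n) (Fin n) ℝ} {σ : Equiv.Perm (Fin n)} {ε : Fin n → ℝ}
    (hPe : ∀ i j, P i j = if i = σ j then ε j else 0) (a b : Fin n) :
    (P * S * Pᵀ) (σ a) (σ b) = ε a * S a b * ε b := by
  rw [Matrix.mul_apply, Finset.sum_eq_single b]
  · rw [Matrix.transpose_apply, hPe, if_pos rfl, Matrix.mul_apply, Finset.sum_eq_single a]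
    · rw [hPe, if_pos rfl]
    · intro k _ hk
      rw [hPe, if_neg (fun h => hk (σ.injective h).symm), zero_mul]
    · exact fun h => absurd (Finset.mem_univ _) h
  · intro k _ hk
    rw [Matrix.transpose_apply, hPe, if_neg (fun h => hk (σ.injective h).symm), mul_zero]
  · exact fun h => absurd (Finset.mem_univ _) h

lemma conj_eq {P : Matrix (Fin n) (Fin n) ℝ} {σ : Equiv.Perm (Fin n)} {ε : Fin n → ℝ}
    (hPe : ∀ i j, P i j = if i = σ j then ε j else 0)
    (hrel : ∀ a b, S (σ a) (σ b) = ε a * ε b * S a b) :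
    P * S * Pᵀ = S := by
  ext x y
  have h1 := conj_apply (S := S) hPe (σ.symm x) (σ.symm y)
  have h2 := hrel (σ.symm x) (σ.symm y)
  rw [Equiv.apply_symm_apply, Equiv.apply_symm_apply] at h1 h2
  rw [h1, h2]
  ring

lemma rel_of_conj {P : Matrix (Fin n) (Fin n) ℝ} {σ : Equiv.Perm (Fin n)} {ε : Fin n → ℝ}
    (hPe : ∀ i j, P i j = if i = σ j then ε j else 0) (hc : P * S * Pᵀ = S) :
    ∀ a b, S (σ a) (σ b) = ε a * ε b * S a b := by
  intro a b
  conv_lhs => rw [← hc]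
  rw [conj_apply (S := S) hPe]
  ring

lemma matOf_eq {φ : Equiv.Perm (XVertex n)} {τ : Equiv.Perm (Fin n)} {d : Fin n → Fin 2}
    (h1 : ∀ i, φ (Sum.inl i) = Sum.inl (τ i))
    (h2 : ∀ i k, φ (Sum.inr (i, k)) = Sum.inr (τ i, k + d i)) :
    ∀ i j, matOf φ i j = if i = τ j then sg (d j) else 0 := by
  intro i j
  show (if φ (Sum.inl j) = Sum.inl i then sgn (φ (Sum.inr (j, 0))) else 0) = _
  rw [h1, h2, zero_add]
  by_cases h : i = τ j
  · rw [if_pos (by rw [h]), if_pos h]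
    rfl
  · rw [if_neg (fun hh => h (Sum.inl.inj hh).symm), if_neg h]

lemma matOf_one : matOf (1 : Equiv.Perm (XVertex n)) = 1 := by
  ext i j
  show (if (Sum.inl j : XVertex n) = Sum.inl i then sgn (Sum.inr (j, (0 : Fin 2)) : XVertex n)
    else 0) = _
  rw [Matrix.one_apply]
  by_cases h : i = j
  · subst h
    rw [if_pos rfl, if_pos rfl]
    rfl
  · rw [if_neg (fun hh => h (Sum.inl.inj hh).symm), if_neg h]

lemma matOf_mul {φ ψ : Equiv.Perm (XVertex n)} (hφ : φ ∈ colorAut S) (hψ : ψ ∈ colorAut S) :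
    matOf (φ * ψ) = matOf φ * matOf ψ := by
  obtain ⟨τ, d, hτ1, hτ2⟩ := colorAut_structure hφ
  obtain ⟨υ, e, hυ1, hυ2⟩ := colorAut_structure hψ
  have hc1 : ∀ i, (φ * ψ) (Sum.inl i) = Sum.inl ((τ * υ) i) := by
    intro i
    rw [Equiv.Perm.mul_apply, hυ1, hτ1]
    rfl
  have hc2 : ∀ i k, (φ * ψ) (Sum.inr (i, k)) = Sum.inr ((τ * υ) i, k + (e i + d (υ i))) := by
    intro i k
    rw [Equiv.Perm.mul_apply, hυ2, hτ2, ← add_assoc]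
    rfl
  ext i j
  rw [matOf_eq hc1 hc2, Matrix.mul_apply, Finset.sum_eq_single (υ j)]
  · rw [matOf_eq hτ1 hτ2, matOf_eq hυ1 hυ2, if_pos rfl, sg_add]
    simp only [Equiv.Perm.mul_apply]
    by_cases h : i = τ (υ j)
    · exact (if_pos h).trans (by rw [if_pos h, mul_comm])
    · exact (if_neg h).trans (by rw [if_neg h, zero_mul])
  · intro k _ hk
    rw [matOf_eq hυ1 hυ2 k j, if_neg hk, mul_zero]
  · exact fun h => absurd (Finset.mem_univ _) h

lemma main_iff {U T : ℝ} {di dj k l : Fin 2} (hU : U = 1 ∨ U = -1)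
    (hT : T = sg di * sg dj * U) :
    ((k + di = l + dj ∧ T = 1) ∨ (k + di ≠ l + dj ∧ T = -1)) ↔
      ((k = l ∧ U = 1) ∨ (k ≠ l ∧ U = -1)) := by
  have hkey := fin2_key k l di dj
  rcases hU with rfl | rfl
  · by_cases hdd : di = dj
    · have hT1 : T = 1 := by rw [hT, sg_if, if_pos hdd]; norm_num
      rw [hT1, hkey]
      norm_num [hdd]
    · have hT1 : T = -1 := by rw [hT, sg_if, if_neg hdd]; norm_num
      rw [hT1, hkey]
      norm_num [hdd]
      try tauto
  · by_cases hdd : di = dj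
    · have hT1 : T = -1 := by rw [hT, sg_if, if_pos hdd]; norm_num
      rw [hT1, hkey]
      norm_num [hdd]
      try tauto
    · have hT1 : T = 1 := by rw [hT, sg_if, if_neg hdd]; norm_num
      rw [hT1, hkey]
      norm_num [hdd]
      try tauto

end SeidelAux

/-- For a Seidel matrix `S` of order `n`, the automorphism group `Aut S`
(the group of signed permutation matrices `P` with `P S Pᵀ = S`) is isomorphic, as a group,
to the automorphism group of the associated two-colored graph `X(S)` (the group of
color-preserving graph automorphisms of `X(S)`). -/
theorem stmt_1 {n : ℕ} (S : Matrix (Fin n) (Fin n) ℝ) (hS : IsSeidel S) :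
    Nonempty (seidelAut S ≃* colorAut S) := by
  classical
  have memS : ∀ φ : Equiv.Perm (XVertex n), φ ∈ colorAut S →
      IsSignedPerm (SeidelAux.matOf φ) ∧ SeidelAux.matOf φ * S * (SeidelAux.matOf φ)ᵀ = S := by
    intro φ hφ
    obtain ⟨τ, d, h1, h2⟩ := SeidelAux.colorAut_structure hφ
    have hPe := SeidelAux.matOf_eq h1 h2
    have hrel := SeidelAux.rel_of_mem hS hφ h2
    exact ⟨⟨τ, fun j => SeidelAux.sg (d j), fun j => SeidelAux.sg_pm _, hPe⟩,
      SeidelAux.conj_eq hPe (fun a b => hrel a b)⟩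
  let F : colorAut S →* seidelAut S := MonoidHom.mk'
    (fun φ => ⟨{ val := SeidelAux.matOf (φ : Equiv.Perm (XVertex n)),
                 inv := SeidelAux.matOf ((φ : Equiv.Perm (XVertex n))⁻¹),
                 val_inv := by
                   rw [← SeidelAux.matOf_mul φ.2 ((colorAut S).inv_mem φ.2)]
                   simp [SeidelAux.matOf_one]
                 inv_val := by
                   rw [← SeidelAux.matOf_mul ((colorAut S).inv_mem φ.2) φ.2]
                   simp [SeidelAux.matOf_one] },
       (memS _ φ.2).1, (memS _ φ.2).2⟩)
    (fun φ ψ => Subtype.ext (Units.ext (SeidelAux.matOf_mul φ.2 ψ.2)))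
  have hinj : Function.Injective F := by
    rw [injective_iff_map_eq_one]
    intro φ hφ1
    obtain ⟨τ, d, h1, h2⟩ := SeidelAux.colorAut_structure φ.2
    have hM : SeidelAux.matOf (φ : Equiv.Perm (XVertex n)) = 1 :=
      congrArg (fun x : seidelAut S => ((x : (Matrix (Fin n) (Fin n) ℝ)ˣ) :
        Matrix (Fin n) (Fin n) ℝ)) hφ1
    have hτ : ∀ j, τ j = j ∧ d j = 0 := by
      intro j
      have h := congrFun (congrFun hM (τ j)) j
      rw [SeidelAux.matOf_eq h1 h2, if_pos rfl] at h
      by_cases hc : τ j = j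
      · refine ⟨hc, ?_⟩
        rw [Matrix.one_apply, if_pos hc] at h
        exact SeidelAux.sg_inj (h.trans SeidelAux.sg_zero.symm)
      · rw [Matrix.one_apply, if_neg hc] at h
        exact absurd h (SeidelAux.sg_ne_zero _)
    refine Subtype.ext (Equiv.ext ?_)
    intro v
    rcases v with i | ⟨i, k⟩
    · rw [h1, (hτ i).1]; rfl
    · rw [h2, (hτ i).1, (hτ i).2, add_zero]; rfl
  have hsurj : Function.Surjective F := by
    rintro ⟨P, hP1, hP2⟩
    obtain ⟨σ, ε, hε, hPe⟩ := hP1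
    let d : Fin n → Fin 2 := fun j => if ε j = 1 then 0 else 1
    have hdj : ∀ j, d j = if ε j = 1 then 0 else 1 := fun _ => rfl
    have hsgd : ∀ j, SeidelAux.sg (d j) = ε j := by
      intro j
      rw [hdj j]
      rcases hε j with h | h
      · rw [if_pos h, SeidelAux.sg_zero, h]
      · rw [if_neg (by rw [h]; norm_num), SeidelAux.sg_one, h]
    have hrel : ∀ a b, S (σ a) (σ b) = ε a * ε b * S a b :=
      SeidelAux.rel_of_conj hPe hP2
    let e : Equiv.Perm (Fin n × Fin 2) :=
      { toFun := fun p => (σ p.1, p.2 + d p.1)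
        invFun := fun p => (σ⁻¹ p.1, p.2 - d (σ⁻¹ p.1))
        left_inv := fun p => by simp
        right_inv := fun p => by simp }
    let φ : Equiv.Perm (XVertex n) := Equiv.sumCongr σ e
    have hφ1 : ∀ i, φ (Sum.inl i) = Sum.inl (σ i) := fun i => rfl
    have hφ2 : ∀ i k, φ (Sum.inr (i, k)) = Sum.inr (σ i, k + d i) := fun i k => rfl
    have hmem : φ ∈ colorAut S := by
      refine ⟨?_, ?_⟩
      · intro a b
        rcases a with i | ⟨i, k⟩ <;> rcases b with j | ⟨j, l⟩
        · rw [hφ1, hφ1]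
          exact iff_of_false (SeidelAux.adj_inl_inl _ _) (SeidelAux.adj_inl_inl _ _)
        · rw [hφ1, hφ2, SeidelAux.adj_inl_inr, SeidelAux.adj_inl_inr]
          exact ⟨fun h => σ.injective h, fun h => congrArg σ h⟩
        · rw [hφ2, hφ1, SeidelAux.adj_inr_inl, SeidelAux.adj_inr_inl]
          exact ⟨fun h => σ.injective h, fun h => congrArg σ h⟩
        · rw [hφ2, hφ2, SeidelAux.adj_inr_inr hS, SeidelAux.adj_inr_inr hS]
          by_cases hij : i = j
          · subst hij
            rw [hrel i i, hS.2.1 i]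
            norm_num
          · exact SeidelAux.main_iff (hS.2.2 i j hij)
              (by rw [hrel i j, hsgd i, hsgd j])
      · intro v
        rcases v with i | p <;> rfl
    refine ⟨⟨φ, hmem⟩, Subtype.ext (Units.ext ?_)⟩
    ext i j
    rw [show ((F ⟨φ, hmem⟩ : seidelAut S) : (Matrix (Fin n) (Fin n) ℝ)ˣ).val
        = SeidelAux.matOf φ from rfl]
    rw [SeidelAux.matOf_eq hφ1 hφ2 i j, hPe i j, hsgd j]
  exact ⟨(MulEquiv.ofBijective F ⟨hinj, hsurj⟩).symm⟩
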